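/- Let G be a finite group and φ : k → K a homomorphism of commutative rings. Then β_k(G) ≥ β_K(G). If moreover φ is faithfully flat, then β_k(G) = β_K(G). -/

import Mathlib

/-- `beta`: see above. -/
noncomputable def beta {A : Type*} [CommRing A] (𝒜 : ℕ → Set A) (B : Subring A) : ℕ∞ :=
  sInf ((↑) '' {n : ℕ | B ≤ Subring.closure {a : A | a ∈ B ∧ ∃ d ≤ n, a ∈ 𝒜 d}})

/-- An `ℕ`-graded commutative `k`-algebra equipped with an action of `G` by
degree-preserving `k`-algebra automorphisms. -/
structure GradedAlgebraWithAction (k : Type) [CommRing k] (G : Type) [Group G] :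
    Type 1 where
  carrier : Type
  [commRing : CommRing carrier]
  [algebra : Algebra k carrier]
  grading : ℕ → Submodule k carrier
  graded : GradedAlgebra grading
  action : G →* (carrier ≃ₐ[k] carrier)
  degPres : ∀ (g : G) (d : ℕ), ∀ a ∈ grading d, action g a ∈ grading d

attribute [instance] GradedAlgebraWithAction.commRing GradedAlgebraWithAction.algebra

namespace GradedAlgebraWithAction

variable {k G : Type} [CommRing k] [Group G] (X : GradedAlgebraWithAction k G)

/-- The invariant subring `A^G`. -/
def inv : Subring X.carrier where
  carrier := {a : X.carrier | ∀ g : G, X.action g a = a}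
  mul_mem' := by intro a b ha hb g; rw [map_mul, ha g, hb g]
  one_mem' := fun g => map_one (X.action g)
  add_mem' := by intro a b ha hb g; rw [map_add, ha g, hb g]
  zero_mem' := fun g => map_zero (X.action g)
  neg_mem' := by intro a ha g; rw [map_neg, ha g]

/-- The invariant subring fixed by a subgroup `H ≤ G`. -/
def invSub (H : Subgroup G) : Subring X.carrier where
  carrier := {a : X.carrier | ∀ g ∈ H, X.action g a = a}
  mul_mem' := by intro a b ha hb g hg; rw [map_mul, ha g hg, hb g hg]
  one_mem' := fun g _ => map_one (X.action g)
  add_mem' := by intro a b ha hb g hg; rw [map_add, ha g hg, hb g hg]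
  zero_mem' := fun g _ => map_zero (X.action g)
  neg_mem' := by intro a ha g hg; rw [map_neg, ha g hg]

/-- `β(A)` of the underlying graded algebra. -/
noncomputable def betaTop : ℕ∞ := beta (fun d => (X.grading d : Set X.carrier)) ⊤

/-- `β(A^G)` for the induced grading on the invariant ring. -/
noncomputable def betaInv : ℕ∞ := beta (fun d => (X.grading d : Set X.carrier)) X.inv

end GradedAlgebraWithAction

/-- `β_k(G)`: the supremum of `β(A^G)` over all `ℕ`-graded commutative `k`-algebras `A`
with an action of `G` by degree-preserving `k`-algebra automorphisms and `β(A) ≤ 1`. -/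
noncomputable def betaRing (k : Type) [CommRing k] (G : Type) [Group G] : ℕ∞ :=
  ⨆ (X : GradedAlgebraWithAction k G) (_ : X.betaTop ≤ 1), X.betaInv


section BetaLemmas
variable {A : Type*} [CommRing A]

lemma beta_le {𝒜 : ℕ → Set A} {B : Subring A} {n : ℕ}
    (h : B ≤ Subring.closure {a : A | a ∈ B ∧ ∃ d ≤ n, a ∈ 𝒜 d}) : beta 𝒜 B ≤ (n : ℕ∞) :=
  sInf_le ⟨n, h, rfl⟩

lemma le_closure_of_beta_le {𝒜 : ℕ → Set A} {B : Subring A} {n : ℕ}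
    (h : beta 𝒜 B ≤ (n : ℕ∞)) :
    B ≤ Subring.closure {a : A | a ∈ B ∧ ∃ d ≤ n, a ∈ 𝒜 d} := by
  by_contra hc
  have hlt : ∀ x ∈ ((↑) '' {m : ℕ |
      B ≤ Subring.closure {a : A | a ∈ B ∧ ∃ d ≤ m, a ∈ 𝒜 d}} : Set ℕ∞),
      ((n : ℕ∞) + 1) ≤ x := by
    rintro - ⟨m, hm, rfl⟩
    rcases le_or_gt (m : ℕ∞) (n : ℕ∞) with hmn | hmn
    · exfalso
      apply hc
      refine hm.trans (Subring.closure_mono ?_)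
      rintro a ⟨haB, d, hd, hda⟩
      exact ⟨haB, d, hd.trans (by exact_mod_cast hmn), hda⟩
    · exact_mod_cast hmn
  have := le_sInf hlt
  have h2 : (n : ℕ∞) + 1 ≤ (n : ℕ∞) := this.trans h
  exact absurd h2 (by exact_mod_cast Nat.not_succ_le_self n)
end BetaLemmas

section FlatLemmas
open TensorProduct
variable {k K : Type} [CommRing k] [CommRing K] [Algebra k K]
variable {M N : Type} [AddCommGroup M] [Module k M] [AddCommGroup N] [Module k N]

lemma baseChange_eq_range (p : Submodule k M) :
    p.baseChange K = LinearMap.range (p.subtype.baseChange K) := by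
  apply le_antisymm
  · rw [Submodule.baseChange_eq_span, Submodule.span_le]
    rintro - ⟨m, hm, rfl⟩
    exact ⟨(1 : K) ⊗ₜ (⟨m, hm⟩ : p), rfl⟩
  · rintro - ⟨x, rfl⟩
    induction x using TensorProduct.induction_on with
    | zero => simp
    | tmul c y => simpa using Submodule.tmul_mem_baseChange_of_mem c y.2
    | add x y hx hy => rw [map_add]; exact Submodule.add_mem _ hx hy

lemma my_baseChange_mono {p q : Submodule k M} (h : p ≤ q) :
    p.baseChange K ≤ q.baseChange K := by
  rw [Submodule.baseChange_eq_span, Submodule.baseChange_eq_span]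
  exact Submodule.span_mono (Set.image_mono h)

lemma span_of_mem_bc {p : Submodule k M} {x : K ⊗[k] M} (h : x ∈ p.baseChange K) :
    x ∈ Submodule.span K (p.map (TensorProduct.mk k K M 1) : Set (K ⊗[k] M)) := by
  rwa [Submodule.baseChange_eq_span] at h

lemma mem_bc_of_span {p : Submodule k M} {x : K ⊗[k] M}
    (h : x ∈ Submodule.span K (p.map (TensorProduct.mk k K M 1) : Set (K ⊗[k] M))) :
    x ∈ p.baseChange K := by
  rwa [Submodule.baseChange_eq_span]

lemma ker_baseChange [Module.Flat k K] (f : M →ₗ[k] N) :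
    LinearMap.ker (f.baseChange K) = (LinearMap.ker f).baseChange K := by
  rw [baseChange_eq_range]
  ext x
  have hex := Module.Flat.lTensor_exact K (LinearMap.exact_subtype_ker_map f)
  constructor
  · intro hx
    have hx' : (f.lTensor K) x = 0 := by
      rw [← congr_fun (LinearMap.baseChange_eq_ltensor (A := K) f) x]
      exact hx
    obtain ⟨y, hy⟩ := (hex x).mp hx'
    refine ⟨y, ?_⟩
    rw [← hy]
    exact congr_fun (LinearMap.baseChange_eq_ltensor (A := K) (LinearMap.ker f).subtype) y
  · rintro ⟨y, rfl⟩
    have : (f.lTensor K) ((LinearMap.ker f).subtype.lTensor K y) = 0 :=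
      (hex _).mpr ⟨y, rfl⟩
    rw [LinearMap.mem_ker, congr_fun (LinearMap.baseChange_eq_ltensor (A := K) f) _,
      congr_fun (LinearMap.baseChange_eq_ltensor (A := K) (LinearMap.ker f).subtype) y]
    exact this

lemma baseChange_map (g : M →ₗ[k] N) (p : Submodule k M) :
    (p.map g).baseChange K = (p.baseChange K).map (g.baseChange K) := by
  simp only [Submodule.baseChange_eq_span, Submodule.map_span, Submodule.map_coe, Set.image_image]
  refine congrArg (Submodule.span K) (Set.image_congr fun m _ => ?_)
  simp

lemma eq_zero_of_one_tmul_eq_zero [Module.FaithfullyFlat k K] (x : M)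
    (h : (1 : K) ⊗ₜ[k] x = 0) : x = 0 := by
  have hf : LinearMap.toSpanSingleton k M x = 0 := by
    rw [Module.FaithfullyFlat.zero_iff_lTensor_zero k K]
    apply LinearMap.ext
    intro z
    induction z using TensorProduct.induction_on with
    | zero => simp
    | tmul c r =>
        have : c ⊗ₜ[k] x = 0 := by
          rw [show c ⊗ₜ[k] x = c • ((1:K) ⊗ₜ[k] x) from by rw [smul_tmul', smul_eq_mul, mul_one], h,
            smul_zero]
        simp [LinearMap.toSpanSingleton_apply, tmul_smul, this]
    | add a b ha hb => simp only [map_add, ha, hb, LinearMap.zero_apply, add_zero]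
  simpa using DFunLike.congr_fun hf 1

lemma mem_of_one_tmul_mem_baseChange [Module.FaithfullyFlat k K] (p : Submodule k M) (x : M)
    (h : (1 : K) ⊗ₜ[k] x ∈ p.baseChange K) : x ∈ p := by
  have hle : p.baseChange K ≤ LinearMap.ker (p.mkQ.baseChange K) := by
    rw [Submodule.baseChange_eq_span, Submodule.span_le]
    rintro - ⟨m, hm, rfl⟩
    simp [LinearMap.mem_ker, LinearMap.baseChange_tmul,
      (Submodule.Quotient.mk_eq_zero p).mpr hm]
  have h0 : (1 : K) ⊗ₜ[k] (p.mkQ x) = 0 := by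
    have := hle h
    rwa [LinearMap.mem_ker, LinearMap.baseChange_tmul] at this
  have := eq_zero_of_one_tmul_eq_zero (k := k) (K := K) _ h0
  rwa [Submodule.mkQ_apply, Submodule.Quotient.mk_eq_zero] at this

end FlatLemmas

section DecomposeAction
open DirectSum

attribute [local instance] GradedAlgebraWithAction.graded

variable {k G : Type} [CommRing k] [Group G]

namespace GradedAlgebraWithAction

variable (X : GradedAlgebraWithAction k G)

lemma action_decompose (g : G) (a : X.carrier) (d : ℕ) :
    (DirectSum.decompose X.grading (X.action g a) d : X.carrier)
      = X.action g (DirectSum.decompose X.grading a d : X.carrier) := by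
  classical
  conv_lhs => rw [← DirectSum.sum_support_decompose X.grading a]
  rw [map_sum, DirectSum.decompose_sum, DFinsupp.finset_sum_apply,
    AddSubmonoidClass.coe_finset_sum]
  rw [Finset.sum_eq_single d]
  · rcases Decidable.em (d ∈ (DirectSum.decompose X.grading a).support) with hd | hd
    · exact DirectSum.decompose_of_mem_same X.grading
        (X.degPres g d _ (SetLike.coe_mem _))
    · rw [DFinsupp.notMem_support_iff.mp hd]
      simp
  · intro i _ hid
    have : X.action g ((DirectSum.decompose X.grading a) i : X.carrier) ∈ X.grading i :=
      X.degPres g i _ (SetLike.coe_mem _)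
    rw [DirectSum.decompose_of_mem_ne X.grading this hid]
  · intro hd
    rw [DFinsupp.notMem_support_iff.mp hd]
    simp

lemma inv_decompose_mem {a : X.carrier} (ha : a ∈ X.inv) (d : ℕ) :
    (DirectSum.decompose X.grading a d : X.carrier) ∈ X.inv := by
  intro g
  have := X.action_decompose g a d
  rw [ha g] at this
  exact this.symm

end GradedAlgebraWithAction
end DecomposeAction

section Part1

variable {k K G : Type} [CommRing k] [CommRing K] [Algebra k K] [Group G]

/-- Restriction of scalars along `k → K`. -/
noncomputable def GradedAlgebraWithAction.res (X : GradedAlgebraWithAction K G) :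
    GradedAlgebraWithAction k G :=
  letI : Algebra k X.carrier := ((algebraMap K X.carrier).comp (algebraMap k K)).toAlgebra
  haveI : IsScalarTower k K X.carrier := IsScalarTower.of_algebraMap_eq fun c => rfl
  { carrier := X.carrier
    grading := fun d => (X.grading d).restrictScalars k
    graded :=
      { one_mem := X.graded.one_mem
        mul_mem := fun {i j gi gj} hi hj => X.graded.mul_mem hi hj
        decompose' := X.graded.decompose'
        left_inv := X.graded.left_inv
        right_inv := X.graded.right_inv }
    action :=
      { toFun := fun g => (X.action g).restrictScalars k
        map_one' := by ext a; exact DFunLike.congr_fun (map_one X.action) a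
        map_mul' := by
          intro g h; ext a
          exact DFunLike.congr_fun (map_mul X.action g h) a }
    degPres := fun g d a ha => X.degPres g d a ha }

end Part1

section Part1b
variable {k K G : Type} [CommRing k] [CommRing K] [Algebra k K] [Group G]

lemma GradedAlgebraWithAction.res_betaTop (X : GradedAlgebraWithAction K G) :
    (X.res (k := k)).betaTop = X.betaTop := rfl

lemma GradedAlgebraWithAction.res_betaInv (X : GradedAlgebraWithAction K G) :
    (X.res (k := k)).betaInv = X.betaInv := rfl

lemma betaRing_le_res (k K : Type) [CommRing k] [CommRing K] [Algebra k K]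
    (G : Type) [Group G] : betaRing K G ≤ betaRing k G := by
  refine iSup_le fun X => iSup_le fun hX => ?_
  have h1 : (X.res (k := k)).betaTop ≤ 1 := by rw [X.res_betaTop]; exact hX
  have := le_iSup₂ (f := fun (Y : GradedAlgebraWithAction k G) (_ : Y.betaTop ≤ 1) => Y.betaInv)
    (X.res (k := k)) h1
  rw [X.res_betaInv] at this
  exact this
end Part1b

section BaseChangeConstr
open TensorProduct DirectSum

attribute [local instance] GradedAlgebraWithAction.graded

variable {k K G : Type} [CommRing k] [CommRing K] [Algebra k K] [Group G]

namespace GradedAlgebraWithAction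

variable (K) (X : GradedAlgebraWithAction k G)

/-- The family of base-changed submodules. -/
noncomputable abbrev bcGrading (d : ℕ) : Submodule K (K ⊗[k] X.carrier) :=
  (X.grading d).baseChange K

/-- degree-`d` inclusion into the base change. -/
noncomputable def bcMk (d : ℕ) : (X.grading d) →ₗ[k] (X.bcGrading K d) where
  toFun y := ⟨(1 : K) ⊗ₜ[k] (y : X.carrier), Submodule.tmul_mem_baseChange_of_mem 1 y.2⟩
  map_add' a b := by ext; simp [TensorProduct.tmul_add]
  map_smul' r a := by ext; simp [TensorProduct.tmul_smul]

/-- map `⨁ 𝒜 d → ⨁ (𝒜 d).baseChange K`. -/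
noncomputable def bcSum : (⨁ d, X.grading d) →ₗ[k] (⨁ d, X.bcGrading K d) :=
  DirectSum.toModule k ℕ _ fun d =>
    (DirectSum.lof k ℕ (fun e => X.bcGrading K e) d) ∘ₗ X.bcMk K d

/-- The decomposition map of the base change. -/
noncomputable def bcDecompose : (K ⊗[k] X.carrier) →ₗ[K] (⨁ d, X.bcGrading K d) :=
  LinearMap.liftBaseChange K
    (X.bcSum K ∘ₗ (DirectSum.decomposeLinearEquiv X.grading).toLinearMap)

lemma bcDecompose_tmul (c : K) (a : X.carrier) :
    X.bcDecompose K (c ⊗ₜ a) = c • X.bcSum K (DirectSum.decompose X.grading a) := rfl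

set_option maxHeartbeats 1000000 in
lemma bcSum_of (d : ℕ) (y : X.grading d) :
    X.bcSum K (DirectSum.lof k ℕ (fun e => X.grading e) d y)
      = DirectSum.lof k ℕ (fun e => X.bcGrading K e) d (X.bcMk K d y) := by
  unfold bcSum
  exact DirectSum.toModule_lof (R := k)
    (φ := fun d => (DirectSum.lof k ℕ (fun e => X.bcGrading K e) d) ∘ₗ X.bcMk K d) d y

lemma bcDecompose_of_mem {d : ℕ} {x : K ⊗[k] X.carrier} (hx : x ∈ X.bcGrading K d) :
    X.bcDecompose K x = DirectSum.lof K ℕ (fun e => X.bcGrading K e) d ⟨x, hx⟩ := by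
  refine Submodule.span_induction (p := fun x _ => ∀ hx : x ∈ X.bcGrading K d,
    X.bcDecompose K x = DirectSum.lof K ℕ (fun e => X.bcGrading K e) d ⟨x, hx⟩)
    ?_ ?_ ?_ ?_ (span_of_mem_bc hx) hx
  · rintro x ⟨m, hm, rfl⟩ -
    have h1 : X.bcDecompose K ((1:K) ⊗ₜ[k] m)
        = DirectSum.lof K ℕ (fun e => X.bcGrading K e) d (X.bcMk K d ⟨m, hm⟩) := by
      rw [bcDecompose_tmul, one_smul, DirectSum.decompose_of_mem X.grading hm,
        ← DirectSum.lof_eq_of k, bcSum_of, DirectSum.lof_eq_of k, ← DirectSum.lof_eq_of K]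
    exact h1.trans (congrArg _ (Subtype.ext rfl))
  · intro _
    rw [map_zero]
    exact ((map_zero _).symm.trans (congrArg _ (Subtype.ext rfl)))
  · intro x y hx hy ihx ihy _
    rw [map_add, ihx (mem_bc_of_span hx), ihy (mem_bc_of_span hy), ← map_add]
    exact congrArg _ (Subtype.ext rfl)
  · intro c x hx ih _
    rw [map_smul, ih (mem_bc_of_span hx), ← map_smul]
    exact congrArg _ (Subtype.ext rfl)

end GradedAlgebraWithAction
end BaseChangeConstr

section BaseChangeConstr2
open TensorProduct DirectSum

attribute [local instance] GradedAlgebraWithAction.graded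

variable {k K G : Type} [CommRing k] [CommRing K] [Algebra k K] [Group G]

namespace GradedAlgebraWithAction

variable (K) (X : GradedAlgebraWithAction k G)

lemma bc_coe_smul (c : K) (z : ⨁ d, X.bcGrading K d) :
    DirectSum.coeAddMonoidHom (fun e => X.bcGrading K e) (c • z)
      = c • DirectSum.coeAddMonoidHom (fun e => X.bcGrading K e) z := by
  induction z using DirectSum.induction_on with
  | zero => simp
  | of d y =>
      rw [← DirectSum.lof_eq_of K, ← map_smul]
      simp only [DirectSum.lof_eq_of, DirectSum.coeAddMonoidHom_of]
      rfl
  | add x y hx hy => rw [smul_add, map_add, map_add, hx, hy, smul_add]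

lemma bc_coe_bcSum (w : ⨁ d, X.grading d) :
    DirectSum.coeAddMonoidHom (fun e => X.bcGrading K e) (X.bcSum K w)
      = (1 : K) ⊗ₜ[k] (DirectSum.coeAddMonoidHom (fun e => X.grading e) w) := by
  induction w using DirectSum.induction_on with
  | zero => simp [TensorProduct.tmul_zero]
  | of d y =>
      rw [← DirectSum.lof_eq_of k, bcSum_of]
      simp only [DirectSum.lof_eq_of, DirectSum.coeAddMonoidHom_of]
      rfl
  | add x y hx hy => rw [map_add, map_add, hx, hy, map_add, TensorProduct.tmul_add]

lemma bc_left_inv (x : K ⊗[k] X.carrier) :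
    DirectSum.coeAddMonoidHom (fun e => X.bcGrading K e) (X.bcDecompose K x) = x := by
  induction x using TensorProduct.induction_on with
  | zero => simp
  | tmul c a =>
      rw [bcDecompose_tmul, bc_coe_smul, bc_coe_bcSum]
      have ha : DirectSum.coeAddMonoidHom (fun e => X.grading e)
          (DirectSum.decompose X.grading a) = a :=
        (DirectSum.decompose X.grading).symm_apply_apply a
      rw [ha, TensorProduct.smul_tmul', smul_eq_mul, mul_one]
  | add x y hx hy => rw [map_add, map_add, hx, hy]

lemma bc_right_inv (w : ⨁ d, X.bcGrading K d) :
    X.bcDecompose K (DirectSum.coeAddMonoidHom (fun e => X.bcGrading K e) w) = w := by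
  induction w using DirectSum.induction_on with
  | zero => simp
  | of d z =>
      rw [DirectSum.coeAddMonoidHom_of, X.bcDecompose_of_mem K z.2, DirectSum.lof_eq_of K]
  | add x y hx hy => rw [map_add, map_add, hx, hy]

lemma bc_mul_mem {i j : ℕ} {x y : K ⊗[k] X.carrier}
    (hx : x ∈ X.bcGrading K i) (hy : y ∈ X.bcGrading K j) :
    x * y ∈ X.bcGrading K (i + j) := by
  refine Submodule.span_induction ?_ ?_ ?_ ?_ (span_of_mem_bc hx)
  · rintro x ⟨m, hm, rfl⟩
    refine Submodule.span_induction ?_ ?_ ?_ ?_ (span_of_mem_bc hy)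
    · rintro y ⟨m', hm', rfl⟩
      have : ((TensorProduct.mk k K X.carrier) 1) m * ((TensorProduct.mk k K X.carrier) 1) m'
          = (1 : K) ⊗ₜ[k] (m * m') := by
        simp [Algebra.TensorProduct.tmul_mul_tmul]
      rw [this]
      exact Submodule.tmul_mem_baseChange_of_mem 1 (X.graded.mul_mem hm hm')
    · simp
    · intro a b _ _ ha hb
      rw [mul_add]
      exact Submodule.add_mem _ ha hb
    · intro c a _ ha
      rw [mul_smul_comm]
      exact Submodule.smul_mem _ c ha
  · simp
  · intro a b _ _ ha hb
    rw [add_mul]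
    exact Submodule.add_mem _ ha hb
  · intro c a _ ha
    rw [smul_mul_assoc]
    exact Submodule.smul_mem _ c ha

lemma bc_one_mem : (1 : K ⊗[k] X.carrier) ∈ X.bcGrading K 0 := by
  rw [Algebra.TensorProduct.one_def]
  exact Submodule.tmul_mem_baseChange_of_mem 1 X.graded.one_mem

end GradedAlgebraWithAction
end BaseChangeConstr2

section BaseChangeConstr3
open TensorProduct DirectSum

attribute [local instance] GradedAlgebraWithAction.graded

variable {k K G : Type} [CommRing k] [CommRing K] [Algebra k K] [Group G]

namespace GradedAlgebraWithAction

variable (K) (X : GradedAlgebraWithAction k G)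

/-- extension of scalars of a graded automorphism. -/
noncomputable def bcEquiv (g : G) : (K ⊗[k] X.carrier) ≃ₐ[K] (K ⊗[k] X.carrier) :=
  AlgEquiv.ofLinearEquiv (LinearEquiv.baseChange k K _ _ (X.action g).toLinearEquiv)
    (by
      rw [Algebra.TensorProduct.one_def]
      show (1 : K) ⊗ₜ[k] (X.action g 1) = 1 ⊗ₜ[k] 1
      rw [map_one])
    (by
      intro x y
      show (X.action g).toLinearMap.baseChange K (x * y)
        = (X.action g).toLinearMap.baseChange K x * (X.action g).toLinearMap.baseChange K y
      induction x using TensorProduct.induction_on with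
      | zero => simp
      | add a b ha hb => rw [add_mul, map_add, ha, hb, map_add, add_mul]
      | tmul c a =>
          induction y using TensorProduct.induction_on with
          | zero => simp
          | add a' b' ha' hb' => rw [mul_add, map_add, ha', hb', map_add, mul_add]
          | tmul c' a' =>
              rw [Algebra.TensorProduct.tmul_mul_tmul, LinearMap.baseChange_tmul,
                LinearMap.baseChange_tmul, LinearMap.baseChange_tmul,
                Algebra.TensorProduct.tmul_mul_tmul]
              simp [map_mul])

lemma bcEquiv_tmul (g : G) (c : K) (a : X.carrier) :
    X.bcEquiv K g (c ⊗ₜ[k] a) = c ⊗ₜ[k] (X.action g a) := rfl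

/-- the base-changed action. -/
noncomputable def bcAction : G →* ((K ⊗[k] X.carrier) ≃ₐ[K] (K ⊗[k] X.carrier)) where
  toFun := X.bcEquiv K
  map_one' := by
    refine AlgEquiv.ext fun x => ?_
    induction x using TensorProduct.induction_on with
    | zero => simp
    | tmul c a => rw [bcEquiv_tmul]; simp
    | add a b ha hb => rw [map_add, ha, hb, map_add]
  map_mul' := by
    intro g h
    refine AlgEquiv.ext fun x => ?_
    induction x using TensorProduct.induction_on with
    | zero => simp
    | tmul c a =>
        rw [AlgEquiv.mul_apply, bcEquiv_tmul, bcEquiv_tmul, bcEquiv_tmul, map_mul]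
        rfl
    | add a b ha hb => rw [map_add, ha, hb, AlgEquiv.mul_apply, map_add]; rfl

lemma bc_degPres (g : G) (d : ℕ) (x : K ⊗[k] X.carrier) (hx : x ∈ X.bcGrading K d) :
    X.bcAction K g x ∈ X.bcGrading K d := by
  refine Submodule.span_induction ?_ ?_ ?_ ?_ (span_of_mem_bc hx)
  · rintro x ⟨m, hm, rfl⟩
    have : X.bcAction K g (((TensorProduct.mk k K X.carrier) 1) m)
        = (1 : K) ⊗ₜ[k] (X.action g m) := rfl
    rw [this]
    exact Submodule.tmul_mem_baseChange_of_mem 1 (X.degPres g d m hm)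
  · simp
  · intro a b _ _ ha hb
    rw [map_add]
    exact Submodule.add_mem _ ha hb
  · intro c a _ ha
    rw [map_smul]
    exact Submodule.smul_mem _ c ha

/-- Base change of a graded algebra with action. -/
noncomputable def bcX : GradedAlgebraWithAction K G where
  carrier := K ⊗[k] X.carrier
  grading := X.bcGrading K
  graded :=
    { one_mem := X.bc_one_mem K
      mul_mem := fun {i j gi gj} hi hj => X.bc_mul_mem K hi hj
      decompose' := X.bcDecompose K
      left_inv := X.bc_left_inv K
      right_inv := X.bc_right_inv K }
  action := X.bcAction K
  degPres := X.bc_degPres K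

end GradedAlgebraWithAction
end BaseChangeConstr3

section Core
open TensorProduct DirectSum

attribute [local instance] GradedAlgebraWithAction.graded

variable {k K G : Type} [CommRing k] [CommRing K] [Algebra k K] [Group G]

namespace GradedAlgebraWithAction

variable (K) (X : GradedAlgebraWithAction k G)

/-- The invariance linear map. -/
noncomputable def invMap : X.carrier →ₗ[k] (G → X.carrier) :=
  LinearMap.pi fun g => (X.action g).toLinearMap - LinearMap.id

lemma mem_ker_invMap {a : X.carrier} : a ∈ LinearMap.ker (X.invMap) ↔ a ∈ X.inv := by
  constructor
  · intro h g
    have := congr_fun (LinearMap.mem_ker.mp h) g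
    simpa [invMap, sub_eq_zero] using this
  · intro h
    rw [LinearMap.mem_ker]
    funext g
    simpa [invMap, sub_eq_zero] using h g

/-- The subring generated by invariants of degree at most `n`, as a `k`-submodule. -/
noncomputable def invGen (n : ℕ) : Submodule k X.carrier where
  carrier := (Subring.closure {a : X.carrier | a ∈ X.inv ∧ ∃ d ≤ n, a ∈ X.grading d} : Set X.carrier)
  add_mem' := add_mem
  zero_mem' := zero_mem _
  smul_mem' := by
    intro c x hx
    rw [Algebra.smul_def]
    refine mul_mem (Subring.subset_closure ⟨?_, 0, Nat.zero_le n, ?_⟩) hx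
    · intro g
      exact (X.action g).commutes c
    · rw [Algebra.algebraMap_eq_smul_one]
      exact Submodule.smul_mem _ c X.graded.one_mem

lemma mem_invGen_of {n : ℕ} {a : X.carrier} (h1 : a ∈ X.inv) {d : ℕ} (hd : d ≤ n)
    (h2 : a ∈ X.grading d) : a ∈ X.invGen n :=
  Subring.subset_closure ⟨h1, d, hd, h2⟩

variable [Finite G] [Module.FaithfullyFlat k K]

set_option synthInstance.maxHeartbeats 400000 in
lemma bc_inv_homog_mem (n : ℕ) (d : ℕ) (hd : d ≤ n) (x : K ⊗[k] X.carrier)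
    (hxi : ∀ g : G, X.bcEquiv K g x = x) (hxd : x ∈ X.bcGrading K d) :
    x ∈ (X.invGen n).baseChange K := by
  classical
  cases nonempty_fintype G
  set p := X.grading d with hp
  have hxd' : x ∈ LinearMap.range (p.subtype.baseChange K) :=
    baseChange_eq_range (K := K) p ▸ hxd
  obtain ⟨y, rfl⟩ := hxd'
  set Λp : (p : Submodule k X.carrier) →ₗ[k] (G → X.carrier) := X.invMap ∘ₗ p.subtype with hΛp
  have hcomp : ∀ (y : K ⊗[k] p) (g : G),
      (TensorProduct.piRightHom k K K (fun _ : G => X.carrier)) ((Λp.baseChange K) y) g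
        = (((X.action g).toLinearMap - LinearMap.id).baseChange K) ((p.subtype.baseChange K) y) := by
    intro y g
    induction y using TensorProduct.induction_on with
    | zero => simp
    | tmul c z => simp [Λp, invMap, LinearMap.baseChange_tmul, TensorProduct.tmul_sub]
    | add a b ha hb => simp only [map_add, Pi.add_apply, ha, hb]
  have hy0 : (Λp.baseChange K) y = 0 := by
    apply (TensorProduct.piRight k K K (fun _ : G => X.carrier)).injective
    rw [map_zero, TensorProduct.piRight_apply]
    funext g
    rw [hcomp y g, LinearMap.baseChange_sub, LinearMap.sub_apply, LinearMap.baseChange_id]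
    have := hxi g
    have hx' : ((X.action g).toLinearMap.baseChange K) ((p.subtype.baseChange K) y)
        = (p.subtype.baseChange K) y := hxi g
    rw [Pi.zero_apply, LinearMap.id_apply, hx', sub_self]
  have hym : y ∈ LinearMap.ker (Λp.baseChange K) := hy0
  rw [ker_baseChange] at hym
  have hmem : (p.subtype.baseChange K) y
      ∈ Submodule.map (p.subtype.baseChange K) ((LinearMap.ker Λp).baseChange K) :=
    ⟨y, hym, rfl⟩
  rw [← baseChange_map] at hmem
  refine my_baseChange_mono (K := K) ?_ hmem
  rw [hΛp, LinearMap.ker_comp, Submodule.map_comap_subtype]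
  rintro z ⟨hz1, hz2⟩
  exact X.mem_invGen_of ((X.mem_ker_invMap).mp hz2) hd hz1

end GradedAlgebraWithAction
end Core

section Core2
open TensorProduct DirectSum

attribute [local instance] GradedAlgebraWithAction.graded

variable {k K G : Type} [CommRing k] [CommRing K] [Algebra k K] [Group G]

namespace GradedAlgebraWithAction

variable (K) (X : GradedAlgebraWithAction k G)

lemma invGen_mul_mem {n : ℕ} {a b : X.carrier} (ha : a ∈ X.invGen n) (hb : b ∈ X.invGen n) :
    a * b ∈ X.invGen n :=
  Subring.mul_mem _ (ha : a ∈ Subring.closure _) (hb : b ∈ Subring.closure _)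

lemma invGen_one_mem (n : ℕ) : (1 : X.carrier) ∈ X.invGen n :=
  Subring.one_mem (Subring.closure _)

lemma bc_invGen_mul_mem (n : ℕ) {x y : K ⊗[k] X.carrier}
    (hx : x ∈ (X.invGen n).baseChange K) (hy : y ∈ (X.invGen n).baseChange K) :
    x * y ∈ (X.invGen n).baseChange K := by
  refine Submodule.span_induction ?_ ?_ ?_ ?_ (span_of_mem_bc hx)
  · rintro x ⟨m, hm, rfl⟩
    refine Submodule.span_induction ?_ ?_ ?_ ?_ (span_of_mem_bc hy)
    · rintro y ⟨m', hm', rfl⟩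
      have : ((TensorProduct.mk k K X.carrier) 1) m * ((TensorProduct.mk k K X.carrier) 1) m'
          = (1 : K) ⊗ₜ[k] (m * m') := by
        simp [Algebra.TensorProduct.tmul_mul_tmul]
      rw [this]
      exact Submodule.tmul_mem_baseChange_of_mem 1 (X.invGen_mul_mem hm hm')
    · simp
    · intro a b _ _ ha hb
      rw [mul_add]; exact Submodule.add_mem _ ha hb
    · intro c a _ ha
      rw [mul_smul_comm]; exact Submodule.smul_mem _ c ha
  · simp
  · intro a b _ _ ha hb
    rw [add_mul]; exact Submodule.add_mem _ ha hb
  · intro c a _ ha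
    rw [smul_mul_assoc]; exact Submodule.smul_mem _ c ha

variable [Finite G] [Module.FaithfullyFlat k K]

lemma inv_le_closure (n : ℕ)
    (hn : (X.bcX K).inv ≤ Subring.closure
      {b | b ∈ (X.bcX K).inv ∧ ∃ d ≤ n, b ∈ ((X.bcX K).grading d : Set (X.bcX K).carrier)}) :
    X.inv ≤ Subring.closure
      {a | a ∈ X.inv ∧ ∃ d ≤ n, a ∈ (X.grading d : Set X.carrier)} := by
  classical
  -- the subring of `K ⊗ A` with carrier `(invGen n).baseChange K`
  let SB : Subring (K ⊗[k] X.carrier) :=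
    { carrier := ((X.invGen n).baseChange K : Set (K ⊗[k] X.carrier))
      zero_mem' := Submodule.zero_mem _
      add_mem' := fun h1 h2 => Submodule.add_mem _ h1 h2
      neg_mem' := fun h => Submodule.neg_mem _ h
      one_mem' := by
        rw [show (1 : K ⊗[k] X.carrier) = (1:K) ⊗ₜ[k] (1:X.carrier) from
          Algebra.TensorProduct.one_def]
        exact Submodule.tmul_mem_baseChange_of_mem 1 (X.invGen_one_mem n)
      mul_mem' := fun h1 h2 => X.bc_invGen_mul_mem K n h1 h2 }
  have hcl : Subring.closure
      {b | b ∈ (X.bcX K).inv ∧ ∃ d ≤ n, b ∈ ((X.bcX K).grading d : Set (X.bcX K).carrier)}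
      ≤ SB := by
    apply Subring.closure_le.mpr
    rintro x ⟨hxi, d, hd, hxd⟩
    exact X.bc_inv_homog_mem K n d hd x hxi hxd
  intro a ha
  have hsum := DirectSum.sum_support_decompose X.grading a
  rw [← hsum]
  refine sum_mem fun i _ => ?_
  have hinv : (DirectSum.decompose X.grading a i : X.carrier) ∈ X.inv :=
    X.inv_decompose_mem ha i
  have hbinv : (1:K) ⊗ₜ[k] (DirectSum.decompose X.grading a i : X.carrier) ∈ (X.bcX K).inv := by
    intro g
    show X.bcEquiv K g _ = _
    rw [bcEquiv_tmul, hinv g]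
  have h2 : (1:K) ⊗ₜ[k] (DirectSum.decompose X.grading a i : X.carrier)
      ∈ (X.invGen n).baseChange K := hcl (hn hbinv)
  exact mem_of_one_tmul_mem_baseChange _ _ h2

lemma betaInv_le_bcX : X.betaInv ≤ (X.bcX K).betaInv := by
  rcases eq_or_ne ((X.bcX K).betaInv) ⊤ with h | h
  · rw [h]; exact le_top
  · obtain ⟨n, hn⟩ := WithTop.ne_top_iff_exists.mp h
    rw [← hn]
    exact beta_le (X.inv_le_closure K n (le_closure_of_beta_le (le_of_eq hn.symm)))

end GradedAlgebraWithAction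
end Core2

section Final
open TensorProduct DirectSum

attribute [local instance] GradedAlgebraWithAction.graded

variable {k K G : Type} [CommRing k] [CommRing K] [Algebra k K] [Group G]

namespace GradedAlgebraWithAction

variable (K) (X : GradedAlgebraWithAction k G)

lemma bcX_betaTop_le (h : X.betaTop ≤ 1) : (X.bcX K).betaTop ≤ 1 := by
  have hX : (⊤ : Subring X.carrier) ≤ Subring.closure
      {a : X.carrier | a ∈ (⊤ : Subring X.carrier) ∧ ∃ d ≤ 1, a ∈ (X.grading d : Set X.carrier)} :=
    le_closure_of_beta_le (by exact_mod_cast h)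
  have : ((1 : ℕ) : ℕ∞) = (1 : ℕ∞) := by norm_cast
  rw [betaTop, ← this]
  refine beta_le ?_
  intro x _
  induction x using TensorProduct.induction_on with
  | zero => exact Subring.zero_mem _
  | add a b ha hb => exact Subring.add_mem _ (ha trivial) (hb trivial)
  | tmul c a =>
      have h1 : (c ⊗ₜ[k] (1 : X.carrier)) ∈ Subring.closure
          {b | b ∈ (⊤ : Subring (X.bcX K).carrier)
            ∧ ∃ d ≤ 1, b ∈ ((X.bcX K).grading d : Set (X.bcX K).carrier)} :=
        Subring.subset_closure ⟨trivial, 0, Nat.zero_le 1,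
          Submodule.tmul_mem_baseChange_of_mem c X.graded.one_mem⟩
      have h2 : ((1:K) ⊗ₜ[k] a) ∈ Subring.closure
          {b | b ∈ (⊤ : Subring (X.bcX K).carrier)
            ∧ ∃ d ≤ 1, b ∈ ((X.bcX K).grading d : Set (X.bcX K).carrier)} := by
        have ha' : a ∈ Subring.closure
            {a : X.carrier | a ∈ (⊤ : Subring X.carrier)
              ∧ ∃ d ≤ 1, a ∈ (X.grading d : Set X.carrier)} := hX trivial
        have hmap := RingHom.map_closure
          ((Algebra.TensorProduct.includeRight : X.carrier →ₐ[k] K ⊗[k] X.carrier) :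
            X.carrier →+* K ⊗[k] X.carrier)
          {a : X.carrier | a ∈ (⊤ : Subring X.carrier)
            ∧ ∃ d ≤ 1, a ∈ (X.grading d : Set X.carrier)}
        have hmem : (1:K) ⊗ₜ[k] a ∈ (Subring.closure
            {a : X.carrier | a ∈ (⊤ : Subring X.carrier)
              ∧ ∃ d ≤ 1, a ∈ (X.grading d : Set X.carrier)}).map
          ((Algebra.TensorProduct.includeRight : X.carrier →ₐ[k] K ⊗[k] X.carrier) :
            X.carrier →+* K ⊗[k] X.carrier) := ⟨a, ha', rfl⟩
        rw [hmap] at hmem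
        refine Subring.closure_mono ?_ hmem
        rintro - ⟨t, ⟨-, d, hd, htd⟩, rfl⟩
        exact ⟨trivial, d, hd, Submodule.tmul_mem_baseChange_of_mem 1 htd⟩
      have heq : c ⊗ₜ[k] a = (c ⊗ₜ[k] (1 : X.carrier)) * ((1:K) ⊗ₜ[k] a) := by
        rw [Algebra.TensorProduct.tmul_mul_tmul, mul_one, one_mul]
      rw [heq]
      exact Subring.mul_mem _ h1 h2

end GradedAlgebraWithAction

end Final

/-- Let `G` be a finite group and `k → K` a homomorphism of
commutative rings (encoded as an algebra structure of `K` over `k`; every `K`-algebra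
is regarded as a `k`-algebra via this map).  Then `β_k(G) ≥ β_K(G)`, with equality if
the map is faithfully flat. -/
theorem betaRing_le_of_ringHom (k K G : Type) [CommRing k] [CommRing K] [Algebra k K]
    [Group G] [Finite G] :
    betaRing K G ≤ betaRing k G ∧
      (Module.FaithfullyFlat k K → betaRing K G = betaRing k G) := by
  refine ⟨betaRing_le_res k K G, fun hff => ?_⟩
  haveI := hff
  refine le_antisymm (betaRing_le_res k K G) ?_
  refine iSup_le fun X => iSup_le fun hX => ?_
  have h1 : (X.bcX K).betaTop ≤ 1 := X.bcX_betaTop_le K hX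
  exact le_trans (X.betaInv_le_bcX K)
    (le_iSup₂ (f := fun (Y : GradedAlgebraWithAction K G) (_ : Y.betaTop ≤ 1) => Y.betaInv)
      (X.bcX K) h1)
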